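/- Let W and B be finite, disjoint sets of patterns (the 'white' computational patterns and the 'black' halting patterns). There exists a term that either matches at least three distinct patterns of W, or matches at least two distinct patterns of W and at least one pattern of B, if and only if there exist three distinct pairwise-compatible patterns in W ∪ B of which at least two belong to W (a 'triangle' of the compatibility graph with at least two white nodes). -/

import Mathlib

/-- Terms: patterns without variables. -/
inductive Tm : Type where
  | atom : ℕ → Tm
  | comp : List Tm → Tm

/-- Patterns: atoms, variables, or composites. -/
inductive Pattern : Type where
  | atom : ℕ → Pattern
  | var : ℕ → Pattern
  | comp : List Pattern → Pattern

/-- A term matches a pattern. -/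
inductive Matches : Tm → Pattern → Prop where
  | var (t : Tm) (v : ℕ) : Matches t (.var v)
  | atom (a : ℕ) : Matches (.atom a) (.atom a)
  | comp (ts : List Tm) (ps : List Pattern)
      (hlen : ts.length = ps.length)
      (h : ∀ (i : ℕ) (h1 : i < ts.length) (h2 : i < ps.length), Matches ts[i] ps[i]) :
      Matches (.comp ts) (.comp ps)

/-- Two patterns are compatible if some term matches both. -/
def Compatible (p q : Pattern) : Prop := ∃ t : Tm, Matches t p ∧ Matches t q

theorem triple (a : Pattern) : ∀ (b c : Pattern) (tab tac tbc : Tm),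
    Matches tab a → Matches tab b → Matches tac a → Matches tac c →
    Matches tbc b → Matches tbc c → ∃ t, Matches t a ∧ Matches t b ∧ Matches t c := by
  match a with
  | .var v =>
    intro b c tab tac tbc _ _ _ _ hb hc
    exact ⟨tbc, .var _ _, hb, hc⟩
  | .atom n =>
    intro b c tab tac tbc ha1 hb ha2 hc _ _
    cases ha1; cases ha2
    exact ⟨.atom n, .atom n, hb, hc⟩
  | .comp as =>
    intro b c tab tac tbc ha1 hb ha2 hc hb2 hc2
    cases ha1 with
    | comp ts _ hlen1 h1 =>
    cases ha2 with
    | comp ts2 _ hlen2 h2 =>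
    cases b with
    | var v => exact ⟨.comp ts2, Matches.comp ts2 as hlen2 h2, .var _ _, hc⟩
    | atom m => cases hb
    | comp bs =>
      cases c with
      | var v => exact ⟨.comp ts, Matches.comp ts as hlen1 h1, hb, .var _ _⟩
      | atom m => cases hc
      | comp cs =>
        cases hb with
        | comp _ _ hlenb h1b =>
        cases hc with
        | comp _ _ hlenc h2c =>
        cases hb2 with
        | comp us _ hlenub h3b =>
        cases hc2 with
        | comp _ _ hlenuc h3c =>
        have lab : bs.length = as.length := by omega
        have lac : cs.length = as.length := by omega
        have key : ∀ (i : ℕ) (hi : i < as.length),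
            ∃ t, Matches t as[i] ∧ Matches t (bs[i]'(lab ▸ hi)) ∧ Matches t (cs[i]'(lac ▸ hi)) := by
          intro i hi
          have h1t : i < ts.length := by omega
          have h2t : i < ts2.length := by omega
          have h3t : i < us.length := by omega
          have hib : i < bs.length := by omega
          have hic : i < cs.length := by omega
          exact triple as[i] bs[i] cs[i] ts[i] ts2[i] us[i]
            (h1 i h1t hi) (h1b i h1t hib)
            (h2 i h2t hi) (h2c i h2t hic)
            (h3b i h3t hib) (h3c i h3t hic)
        let f : Fin as.length → Tm := fun i => (key i i.2).choose
        refine ⟨.comp (List.ofFn f), ?_, ?_, ?_⟩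
        · refine Matches.comp _ _ (by simp) ?_
          intro i hi1 hi2
          simpa [f] using (key i hi2).choose_spec.1
        · refine Matches.comp _ _ (by simp; omega) ?_
          intro i hi1 hi2
          have hi : i < as.length := by simpa using hi1
          simpa [f] using (key i hi).choose_spec.2.1
        · refine Matches.comp _ _ (by simp; omega) ?_
          intro i hi1 hi2
          have hi : i < as.length := by simpa using hi1
          simpa [f] using (key i hi).choose_spec.2.2
termination_by sizeOf a
decreasing_by
  have h := List.sizeOf_lt_of_mem (as.getElem_mem hi)
  simp only [Pattern.comp.sizeOf_spec]
  omega

/-- For disjoint finite sets of 'white' (computational) patterns `W` and 'black'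
(halting) patterns `B`: some term matches at least three distinct patterns of `W`, or
at least two distinct patterns of `W` together with a pattern of `B`, iff the
compatibility graph on `W ∪ B` contains a triangle (three distinct pairwise-compatible
patterns) with at least two white nodes. -/
theorem ambiguity_iff_triangle (W B : Finset Pattern) (hWB : Disjoint W B) :
    (∃ t : Tm,
        (∃ p₁ p₂ p₃, p₁ ∈ W ∧ p₂ ∈ W ∧ p₃ ∈ W ∧
          p₁ ≠ p₂ ∧ p₁ ≠ p₃ ∧ p₂ ≠ p₃ ∧
          Matches t p₁ ∧ Matches t p₂ ∧ Matches t p₃) ∨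
        (∃ p₁ p₂, p₁ ∈ W ∧ p₂ ∈ W ∧ p₁ ≠ p₂ ∧
          Matches t p₁ ∧ Matches t p₂ ∧ ∃ b ∈ B, Matches t b)) ↔
    (∃ p₁ p₂ p₃, p₁ ∈ W ∧ p₂ ∈ W ∧ (p₃ ∈ W ∨ p₃ ∈ B) ∧
      p₁ ≠ p₂ ∧ p₁ ≠ p₃ ∧ p₂ ≠ p₃ ∧
      Compatible p₁ p₂ ∧ Compatible p₁ p₃ ∧ Compatible p₂ p₃) := by
  constructor
  · rintro ⟨t, ⟨p₁, p₂, p₃, h1, h2, h3, n12, n13, n23, m1, m2, m3⟩ |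
      ⟨p₁, p₂, h1, h2, n12, m1, m2, b, hb, mb⟩⟩
    · exact ⟨p₁, p₂, p₃, h1, h2, Or.inl h3, n12, n13, n23,
        ⟨t, m1, m2⟩, ⟨t, m1, m3⟩, ⟨t, m2, m3⟩⟩
    · refine ⟨p₁, p₂, b, h1, h2, Or.inr hb, n12, ?_, ?_,
        ⟨t, m1, m2⟩, ⟨t, m1, mb⟩, ⟨t, m2, mb⟩⟩
      · rintro rfl; exact (Finset.disjoint_left.mp hWB h1) hb
      · rintro rfl; exact (Finset.disjoint_left.mp hWB h2) hb
  · rintro ⟨p₁, p₂, p₃, h1, h2, h3, n12, n13, n23,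
      ⟨t12, m121, m122⟩, ⟨t13, m131, m133⟩, ⟨t23, m232, m233⟩⟩
    obtain ⟨t, mt1, mt2, mt3⟩ := triple p₁ p₂ p₃ t12 t13 t23 m121 m122 m131 m133 m232 m233
    rcases h3 with h3 | h3
    · exact ⟨t, Or.inl ⟨p₁, p₂, p₃, h1, h2, h3, n12, n13, n23, mt1, mt2, mt3⟩⟩
    · exact ⟨t, Or.inr ⟨p₁, p₂, h1, h2, n12, mt1, mt2, p₃, h3, mt3⟩⟩
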